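/- Let b_{ij} = b_{ji} ≥ 0 be given and let X be the n×n symmetric random matrix with X_{ij} = b_{ij} g_{ij}, g_{ij} i.i.d. standard Gaussian (modulo symmetry). Define x : ℝ^n → ℝ^n by x_i(v) = v_i (∑_j b_{ij}² v_j²)^{1/2}. Then for all v, w ∈ ℝ^n, E[(⟨v,Xv⟩ − ⟨w,Xw⟩)²] ≤ 4‖x(v) − x(w)‖² − ∑_{i,j} (v_i² − w_i²) b_{ij}² (v_j² − w_j²). -/

import Mathlib

open MeasureTheory ProbabilityTheory Real Filter Topology Finset
open scoped NNReal ENNReal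

set_option maxHeartbeats 1000000


lemma pdf01 (x : ℝ) : gaussianPDFReal 0 1 x = (√(2 * π))⁻¹ * rexp (-(2⁻¹) * x ^ 2) := by
  rw [gaussianPDFReal]
  have h1 : ((1 : ℝ≥0) : ℝ) = 1 := rfl
  rw [h1, show (2 : ℝ) * π * 1 = 2 * π by ring,
    show ∀ y : ℝ, -(y - 0) ^ 2 / (2 * 1) = -(2⁻¹) * y ^ 2 from fun y => by ring]

lemma gauss_int_eq (f : ℝ → ℝ) :
    ∫ x, f x ∂(gaussianReal 0 1) = ∫ x, gaussianPDFReal 0 1 x * f x := by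
  rw [gaussianReal_of_var_ne_zero 0 one_ne_zero]
  have : (gaussianPDF 0 1) = fun x => ((Real.toNNReal (gaussianPDFReal 0 1 x) : ℝ≥0) : ℝ≥0∞) := by
    ext x; simp [gaussianPDF, ENNReal.ofReal]
  rw [this, integral_withDensity_eq_integral_smul
    ((measurable_gaussianPDFReal 0 1).real_toNNReal) f]
  congr 1; ext x
  simp [NNReal.smul_def, Real.coe_toNNReal _ (gaussianPDFReal_nonneg 0 1 x)]

lemma int_x_exp : Integrable (fun x : ℝ => x * rexp (-(2⁻¹) * x ^ 2)) := by
  simpa using integrable_mul_exp_neg_mul_sq (b := 2⁻¹) (by norm_num)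

lemma int_x2_exp : Integrable (fun x : ℝ => x ^ 2 * rexp (-(2⁻¹) * x ^ 2)) := by
  have := integrable_rpow_mul_exp_neg_mul_sq (b := 2⁻¹) (by norm_num) (s := 2) (by norm_num)
  simpa [Real.rpow_natCast] using this

lemma int_exp : Integrable (fun x : ℝ => rexp (-(2⁻¹) * x ^ 2)) :=
  integrable_exp_neg_mul_sq (by norm_num)

lemma gauss_integrable_id : Integrable (fun x : ℝ => x) (gaussianReal 0 1) := by
  rw [gaussianReal_of_var_ne_zero 0 one_ne_zero,
    integrable_withDensity_iff (measurable_gaussianPDF 0 1)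
      (ae_of_all _ fun x => ENNReal.ofReal_lt_top)]
  have : (fun x : ℝ => x * (gaussianPDF 0 1 x).toReal)
      = fun x : ℝ => (√(2 * π))⁻¹ * (x * rexp (-(2⁻¹) * x ^ 2)) := by
    ext x
    rw [gaussianPDF, ENNReal.toReal_ofReal (gaussianPDFReal_nonneg 0 1 x), pdf01]
    ring
  rw [this]
  exact int_x_exp.const_mul _

lemma gauss_integrable_sq : Integrable (fun x : ℝ => x ^ 2) (gaussianReal 0 1) := by
  rw [gaussianReal_of_var_ne_zero 0 one_ne_zero,
    integrable_withDensity_iff (measurable_gaussianPDF 0 1)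
      (ae_of_all _ fun x => ENNReal.ofReal_lt_top)]
  have : (fun x : ℝ => x ^ 2 * (gaussianPDF 0 1 x).toReal)
      = fun x : ℝ => (√(2 * π))⁻¹ * (x ^ 2 * rexp (-(2⁻¹) * x ^ 2)) := by
    ext x
    rw [gaussianPDF, ENNReal.toReal_ofReal (gaussianPDFReal_nonneg 0 1 x), pdf01]
    ring
  rw [this]
  exact int_x2_exp.const_mul _

lemma gauss_mean : ∫ x, x ∂(gaussianReal 0 1) = 0 := by
  rw [gauss_int_eq]
  have h0 : ∫ x : ℝ, gaussianPDFReal 0 1 x * x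
      = -∫ x : ℝ, gaussianPDFReal 0 1 x * x := by
    nth_rewrite 1 [← integral_neg_eq_self (fun x : ℝ => gaussianPDFReal 0 1 x * x) volume]
    rw [← integral_neg]
    congr 1; ext x
    simp only [pdf01]
    ring_nf
  linarith [h0]

lemma Fderiv (x : ℝ) : HasDerivAt (fun y : ℝ => -y * rexp (-(2⁻¹) * y ^ 2))
    (x ^ 2 * rexp (-(2⁻¹) * x ^ 2) - rexp (-(2⁻¹) * x ^ 2)) x := by
  have h1 : HasDerivAt (fun y : ℝ => -(2⁻¹) * y ^ 2) (-(2⁻¹) * (2 * x)) x := by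
    simpa using ((hasDerivAt_pow 2 x).const_mul (-(2⁻¹) : ℝ))
  have h2 := h1.exp
  have h3 : HasDerivAt (fun y : ℝ => -y) (-1 : ℝ) x := (hasDerivAt_id x).neg
  have h4 := h3.mul h2
  exact h4.congr_deriv (by ring)

lemma Ftop : Tendsto (fun y : ℝ => -y * rexp (-(2⁻¹) * y ^ 2)) atTop (𝓝 0) := by
  have h := (rpow_mul_exp_neg_mul_sq_isLittleO_exp_neg (b := 2⁻¹) (by norm_num) 1)
  have h0 : Tendsto (fun y : ℝ => rexp (-(1/2) * y)) atTop (𝓝 0) :=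
    Real.tendsto_exp_atBot.comp (tendsto_id.const_mul_atTop_of_neg (by norm_num))
  have h2 := h.tendsto_zero_of_tendsto h0
  have h3 : Tendsto (fun y : ℝ => y * rexp (-(2⁻¹) * y ^ 2)) atTop (𝓝 0) := by
    refine h2.congr' ?_
    filter_upwards [eventually_gt_atTop (0:ℝ)] with y hy
    rw [Real.rpow_one]
  simpa using h3.neg

lemma Fbot : Tendsto (fun y : ℝ => -y * rexp (-(2⁻¹) * y ^ 2)) atBot (𝓝 0) := by
  have h := (Ftop.comp tendsto_neg_atBot_atTop).neg
  rw [neg_zero] at h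
  refine h.congr fun y => ?_
  simp only [Function.comp_apply, neg_neg, neg_sq]
  ring

lemma int_x2_exp' : Integrable (fun x : ℝ => x ^ 2 * rexp (-(2⁻¹) * x ^ 2)) := by
  have := integrable_rpow_mul_exp_neg_mul_sq (b := 2⁻¹) (by norm_num) (s := 2) (by norm_num)
  simpa [Real.rpow_natCast] using this

lemma int_exp' : Integrable (fun x : ℝ => rexp (-(2⁻¹) * x ^ 2)) :=
  integrable_exp_neg_mul_sq (by norm_num)

lemma key_ibp : ∫ x : ℝ, x ^ 2 * rexp (-(2⁻¹) * x ^ 2) = ∫ x : ℝ, rexp (-(2⁻¹) * x ^ 2) := by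
  have h := integral_of_hasDerivAt_of_tendsto (f' := fun x : ℝ =>
      x ^ 2 * rexp (-(2⁻¹) * x ^ 2) - rexp (-(2⁻¹) * x ^ 2)) Fderiv
      (int_x2_exp'.sub int_exp') Fbot Ftop
  rw [integral_sub int_x2_exp' int_exp'] at h
  have h2 : (∫ x : ℝ, x ^ 2 * rexp (-(2⁻¹) * x ^ 2)) - ∫ x : ℝ, rexp (-(2⁻¹) * x ^ 2) = 0 := by
    rw [h]; ring
  linarith

lemma int_exp_val : ∫ x : ℝ, rexp (-(2⁻¹) * x ^ 2) = √(2 * π) := by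
  rw [integral_gaussian (2⁻¹), show (π / 2⁻¹) = 2 * π by ring]

lemma gauss_sq : ∫ x, x ^ 2 ∂(gaussianReal 0 1) = 1 := by
  rw [gauss_int_eq]
  have h : (fun x : ℝ => gaussianPDFReal 0 1 x * x ^ 2)
      = fun x : ℝ => (√(2 * π))⁻¹ * (x ^ 2 * rexp (-(2⁻¹) * x ^ 2)) := by
    ext x; rw [pdf01]; ring
  rw [h, integral_const_mul, key_ibp, int_exp_val,
    inv_mul_cancel₀ (Real.sqrt_ne_zero'.mpr (by positivity))]







variable {Ω : Type} [MeasurableSpace Ω] {μ : Measure Ω} [IsProbabilityMeasure μ]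

lemma aux_aemeas {G : Ω → ℝ} (h : μ.map G = gaussianReal 0 1) : AEMeasurable G μ := by
  by_contra hc
  rw [Measure.map_of_not_aemeasurable hc] at h
  have h2 := congrArg (fun m : Measure ℝ => m Set.univ) h
  simp [measure_univ] at h2

lemma sq_sum_integral {ι : Type} [Fintype ι] [DecidableEq ι] (c : ι → ℝ) (G : ι → Ω → ℝ)
    (hmap : ∀ q, μ.map (G q) = gaussianReal 0 1)
    (hind : iIndepFun G μ) :
    ∫ ω, (∑ q, c q * G q ω) ^ 2 ∂μ = ∑ q, (c q) ^ 2 := by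
  have hmeas : ∀ q, AEMeasurable (G q) μ := fun q => aux_aemeas (hmap q)
  have hint1 : ∀ q, Integrable (G q) μ := by
    intro q
    have h0 : Integrable (fun x : ℝ => x) (μ.map (G q)) := by
      rw [hmap q]; exact gauss_integrable_id
    exact (integrable_map_measure aestronglyMeasurable_id (hmeas q)).mp h0
  have hint2 : ∀ q, Integrable (fun ω => G q ω ^ 2) μ := by
    intro q
    have h0 : Integrable (fun x : ℝ => x ^ 2) (μ.map (G q)) := by
      rw [hmap q]; exact gauss_integrable_sq
    exact (integrable_map_measure (by fun_prop) (hmeas q)).mp h0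
  have hmean : ∀ q, ∫ ω, G q ω ∂μ = 0 := by
    intro q
    have h0 := integral_map (hmeas q) (f := fun x : ℝ => x) aestronglyMeasurable_id
    rw [hmap q, gauss_mean] at h0
    exact h0.symm
  have hsq : ∀ q, ∫ ω, G q ω ^ 2 ∂μ = 1 := by
    intro q
    have h0 := integral_map (hmeas q) (f := fun x : ℝ => x ^ 2) (by fun_prop)
    rw [hmap q, gauss_sq] at h0
    exact h0.symm
  have hintqr : ∀ q r, Integrable (fun ω => (c q * G q ω) * (c r * G r ω)) μ := by
    intro q r
    rcases eq_or_ne q r with rfl | hqr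
    · have := (hint2 q).const_mul (c q * c q)
      refine this.congr ?_  -- wrong direction? Integrable.congr : Integrable f → f =ᵐ g → Integrable g
      exact ae_of_all _ fun ω => by ring
    · have hi := (hind.indepFun hqr).integrable_mul (hint1 q) (hint1 r)
      have := hi.const_mul (c q * c r)
      refine this.congr (ae_of_all _ fun ω => ?_)
      simp only [Pi.mul_apply]
      ring
  calc ∫ ω, (∑ q, c q * G q ω) ^ 2 ∂μ
      = ∫ ω, ∑ q, ∑ r, (c q * G q ω) * (c r * G r ω) ∂μ := by
        congr 1; funext ω
        rw [sq, Finset.sum_mul_sum]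
    _ = ∑ q, ∑ r, ∫ ω, (c q * G q ω) * (c r * G r ω) ∂μ := by
        rw [integral_finset_sum _ (fun q _ => integrable_finset_sum _ (fun r _ => hintqr q r))]
        exact Finset.sum_congr rfl fun q _ => integral_finset_sum _ (fun r _ => hintqr q r)
    _ = ∑ q, ∑ r, if q = r then (c q) ^ 2 else 0 := by
        refine Finset.sum_congr rfl fun q _ => Finset.sum_congr rfl fun r _ => ?_
        rcases eq_or_ne q r with rfl | hqr
        · simp only [if_pos rfl]
          have : (fun ω => (c q * G q ω) * (c q * G q ω))
              = fun ω => (c q * c q) * (G q ω ^ 2) := by funext ω; ring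
          rw [this, integral_const_mul, hsq q, sq]
          simp
        · rw [if_neg hqr]
          have : (fun ω => (c q * G q ω) * (c r * G r ω))
              = fun ω => (c q * c r) * (G q ω * G r ω) := by funext ω; ring
          rw [this, integral_const_mul]
          have hmul := IndepFun.integral_mul_eq_mul_integral (hind.indepFun hqr) (hmeas q).aestronglyMeasurable
            (hmeas r).aestronglyMeasurable
          rw [show (G q * G r) = (fun a => G q a * G r a) from rfl] at hmul
          rw [hmul, hmean q, hmean r]
          ring
    _ = ∑ q, (c q) ^ 2 := by simp

lemma sum_pairs {n : ℕ} (X : Fin n × Fin n → ℝ) (hsym : ∀ i j, X (i, j) = X (j, i)) :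
    ∑ p : Fin n × Fin n, X p
      = ∑ q : {q : Fin n × Fin n // q.1 ≤ q.2}, (if q.1.1 = q.1.2 then 1 else 2) * X q.1 := by
  classical
  have hsub : ∑ q : {q : Fin n × Fin n // q.1 ≤ q.2}, (if q.1.1 = q.1.2 then 1 else 2) * X q.1
      = ∑ p ∈ univ.filter (fun p : Fin n × Fin n => p.1 ≤ p.2),
          (if p.1 = p.2 then 1 else 2) * X p := by
    exact (Finset.sum_subtype (p := fun q : Fin n × Fin n => q.1 ≤ q.2)
      (univ.filter (fun p : Fin n × Fin n => p.1 ≤ p.2)) (fun x => by simp)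
      (fun p => (if p.1 = p.2 then 1 else 2) * X p)).symm
  rw [hsub]
  rw [← Finset.sum_filter_add_sum_filter_not univ (fun p : Fin n × Fin n => p.1 ≤ p.2) X]
  have h2 : ∑ p ∈ univ.filter (fun p : Fin n × Fin n => ¬ p.1 ≤ p.2), X p
      = ∑ p ∈ univ.filter (fun p : Fin n × Fin n => p.1 < p.2), X p := by
    refine Finset.sum_nbij' (fun p => Prod.swap p) (fun p => Prod.swap p) ?_ ?_ ?_ ?_ ?_
    · intro p hp; simp only [mem_filter, mem_univ, true_and] at hp ⊢
      exact lt_of_not_ge hp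
    · intro p hp; simp only [mem_filter, mem_univ, true_and] at hp ⊢
      exact not_le_of_gt hp
    · intro p _; simp
    · intro p _; simp
    · intro p _; exact (hsym p.2 p.1).symm
  rw [h2]
  have h3 : ∑ p ∈ univ.filter (fun p : Fin n × Fin n => p.1 ≤ p.2),
        (if p.1 = p.2 then 1 else 2) * X p
      = (∑ p ∈ univ.filter (fun p : Fin n × Fin n => p.1 ≤ p.2), X p)
        + ∑ p ∈ univ.filter (fun p : Fin n × Fin n => p.1 < p.2), X p := by
    have h4 : ∀ p ∈ univ.filter (fun p : Fin n × Fin n => p.1 ≤ p.2),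
        (if p.1 = p.2 then 1 else 2) * X p = X p + (if p.1 < p.2 then X p else 0) := by
      intro p hp
      simp only [mem_filter, mem_univ, true_and] at hp
      rcases eq_or_lt_of_le hp with h | h
      · rw [if_pos h, if_neg (by simp [h, lt_irrefl]), add_zero, one_mul]
      · rw [if_neg (ne_of_lt h), if_pos h]; ring
    rw [Finset.sum_congr rfl h4, Finset.sum_add_distrib]
    congr 1
    rw [Finset.sum_ite, Finset.sum_const_zero, add_zero, Finset.filter_filter]
    apply Finset.sum_congr _ (fun _ _ => rfl)
    apply Finset.filter_congr
    intro p _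
    simp only [iff_self_and, and_iff_right_iff_imp]
    exact fun h => le_of_lt h
  rw [h3]

-- pairwise kernel nonnegativity
lemma key_pair (vi wi vj wj : ℝ) :
    0 ≤ ((vi^2 + wi^2) * (vj^2 + wj^2) + 4 * (vi*wi) * (vj*wj)
          - 4 * max (vi*wi) 0 * (vj^2 + wj^2) + 8 * max (-(vi*wi)) 0 * |vj*wj|)
        + ((vj^2 + wj^2) * (vi^2 + wi^2) + 4 * (vj*wj) * (vi*wi)
          - 4 * max (vj*wj) 0 * (vi^2 + wi^2) + 8 * max (-(vj*wj)) 0 * |vi*wi|) := by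
  rcases le_or_gt 0 (vi*wi) with hi | hi <;> rcases le_or_gt 0 (vj*wj) with hj | hj
  · rw [max_eq_left hi, max_eq_left hj, max_eq_right (by linarith), max_eq_right (by linarith)]
    nlinarith [mul_nonneg (sq_nonneg (vi - wi)) (sq_nonneg (vj - wj)), sq_nonneg (vi-wi), sq_nonneg (vj-wj)]
  · rw [max_eq_left hi, max_eq_right (le_of_lt hj), max_eq_right (by linarith),
      max_eq_left (by linarith), abs_of_nonneg hi]
    nlinarith [mul_nonneg (sq_nonneg (vi - wi)) (add_nonneg (sq_nonneg vj) (sq_nonneg wj))]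
  · rw [max_eq_right (le_of_lt hi), max_eq_left hj, max_eq_left (by linarith),
      max_eq_right (by linarith), abs_of_nonneg hj]
    nlinarith [mul_nonneg (sq_nonneg (vj - wj)) (add_nonneg (sq_nonneg vi) (sq_nonneg wi))]
  · rw [max_eq_right (le_of_lt hi), max_eq_right (le_of_lt hj), max_eq_left (by linarith),
      max_eq_left (by linarith), abs_of_neg hi, abs_of_neg hj]
    nlinarith [mul_pos (neg_pos.mpr hi) (neg_pos.mpr hj)]

-- per-i bound: 2 t √A √B ≤ t⁺ (A+B) - 2 t⁻ K
lemma cross_bound (t A B K : ℝ) (hA : 0 ≤ A) (hB : 0 ≤ B) (hK : 0 ≤ K)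
    (hKAB : K ^ 2 ≤ A * B) :
    2 * t * (Real.sqrt A * Real.sqrt B) ≤ max t 0 * (A + B) - 2 * max (-t) 0 * K := by
  have hsA := Real.sq_sqrt hA
  have hsB := Real.sq_sqrt hB
  have hKle : K ≤ Real.sqrt A * Real.sqrt B := by
    rw [← Real.sqrt_mul hA]
    exact (Real.le_sqrt hK (mul_nonneg hA hB)).mpr hKAB
  rcases le_or_gt 0 t with ht | ht
  · rw [max_eq_left ht, max_eq_right (by linarith)]
    nlinarith [sq_nonneg (Real.sqrt A - Real.sqrt B), Real.sqrt_nonneg A, Real.sqrt_nonneg B]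
  · rw [max_eq_right (le_of_lt ht), max_eq_left (by linarith)]
    nlinarith

lemma sum_sum_add {n : ℕ} (f g : Fin n → Fin n → ℝ) :
    ((∑ i, ∑ j, f i j) + ∑ i, ∑ j, g i j) = ∑ i, ∑ j, (f i j + g i j) := by
  rw [← Finset.sum_add_distrib]
  exact Finset.sum_congr rfl fun i _ => (Finset.sum_add_distrib).symm

lemma det_main {n : ℕ} (b : Fin n → Fin n → ℝ) (hbsym : ∀ i j, b i j = b j i)
    (v w : Fin n → ℝ) :
    2 * (∑ i, ∑ j, (b i j * (v i * v j - w i * w j)) ^ 2)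
      ≤ 4 * (∑ i, (v i * Real.sqrt (∑ j, b i j ^ 2 * v j ^ 2)
            - w i * Real.sqrt (∑ j, b i j ^ 2 * w j ^ 2)) ^ 2)
        - ∑ i, ∑ j, (v i ^ 2 - w i ^ 2) * b i j ^ 2 * (v j ^ 2 - w j ^ 2) := by
  classical
  set A : Fin n → ℝ := fun i => ∑ j, b i j ^ 2 * v j ^ 2 with hA
  set B : Fin n → ℝ := fun i => ∑ j, b i j ^ 2 * w j ^ 2 with hB
  set K : Fin n → ℝ := fun i => ∑ j, b i j ^ 2 * |v j * w j| with hK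
  set brk : Fin n → Fin n → ℝ := fun i j =>
    4 * v i ^ 2 * v j ^ 2 + 4 * w i ^ 2 * w j ^ 2
      - 4 * max (v i * w i) 0 * (v j ^ 2 + w j ^ 2)
      + 8 * max (-(v i * w i)) 0 * |v j * w j| with hbrk
  set Qc : Fin n → Fin n → ℝ := fun i j =>
    (v i ^ 2 + w i ^ 2) * (v j ^ 2 + w j ^ 2) + 4 * (v i * w i) * (v j * w j)
      - 4 * max (v i * w i) 0 * (v j ^ 2 + w j ^ 2)
      + 8 * max (-(v i * w i)) 0 * |v j * w j| with hQc
  have hAnn : ∀ i, 0 ≤ A i := fun i => Finset.sum_nonneg fun j _ => by positivity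
  have hBnn : ∀ i, 0 ≤ B i := fun i => Finset.sum_nonneg fun j _ => by positivity
  have hKnn : ∀ i, 0 ≤ K i := fun i => Finset.sum_nonneg fun j _ => by positivity
  have hCS : ∀ i, K i ^ 2 ≤ A i * B i := by
    intro i
    have h := Finset.sum_mul_sq_le_sq_mul_sq Finset.univ
      (fun j => b i j * |v j|) (fun j => b i j * |w j|)
    have e1 : ∑ j, (b i j * |v j|) * (b i j * |w j|) = K i := by
      refine Finset.sum_congr rfl fun j _ => ?_
      rw [abs_mul]
      ring
    have e2 : ∑ j, (b i j * |v j|) ^ 2 = A i := by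
      refine Finset.sum_congr rfl fun j _ => ?_
      rw [mul_pow, sq_abs]
    have e3 : ∑ j, (b i j * |w j|) ^ 2 = B i := by
      refine Finset.sum_congr rfl fun j _ => ?_
      rw [mul_pow, sq_abs]
    rw [e1, e2, e3] at h
    exact h
  -- per-i bound
  have hper : ∀ i, ∑ j, b i j ^ 2 * brk i j
      ≤ 4 * (v i * Real.sqrt (A i) - w i * Real.sqrt (B i)) ^ 2 := by
    intro i
    have hsplit : ∑ j, b i j ^ 2 * brk i j
        = 4 * v i ^ 2 * A i + 4 * w i ^ 2 * B i
          - 4 * max (v i * w i) 0 * (A i + B i) + 8 * max (-(v i * w i)) 0 * K i := by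
      have h1 : ∀ j ∈ Finset.univ, b i j ^ 2 * brk i j
          = (4 * v i ^ 2) * (b i j ^ 2 * v j ^ 2) + (4 * w i ^ 2) * (b i j ^ 2 * w j ^ 2)
            - (4 * max (v i * w i) 0) * (b i j ^ 2 * v j ^ 2 + b i j ^ 2 * w j ^ 2)
            + (8 * max (-(v i * w i)) 0) * (b i j ^ 2 * |v j * w j|) := by
        intro j _; rw [hbrk]; ring
      rw [Finset.sum_congr rfl h1]
      simp only [Finset.sum_add_distrib, Finset.sum_sub_distrib, ← Finset.mul_sum]
      rfl
    have hexp : (v i * Real.sqrt (A i) - w i * Real.sqrt (B i)) ^ 2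
        = v i ^ 2 * A i + w i ^ 2 * B i
          - 2 * (v i * w i) * (Real.sqrt (A i) * Real.sqrt (B i)) := by
      rw [sub_sq, mul_pow, mul_pow, Real.sq_sqrt (hAnn i), Real.sq_sqrt (hBnn i)]
      ring
    have hcb := cross_bound (v i * w i) (A i) (B i) (K i) (hAnn i) (hBnn i) (hKnn i) (hCS i)
    rw [hsplit, hexp]
    nlinarith [hcb]
  -- global nonnegativity of the Q-part
  have hQpos : 0 ≤ ∑ i, ∑ j, b i j ^ 2 * Qc i j := by
    have hdouble : 2 * ∑ i, ∑ j, b i j ^ 2 * Qc i j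
        = ∑ i, ∑ j, b i j ^ 2 * (Qc i j + Qc j i) := by
      rw [two_mul]
      nth_rewrite 2 [Finset.sum_comm]
      rw [sum_sum_add]
      refine Finset.sum_congr rfl fun i _ => Finset.sum_congr rfl fun j _ => ?_
      rw [hbsym j i]
      ring
    have hterm : 0 ≤ ∑ i, ∑ j, b i j ^ 2 * (Qc i j + Qc j i) := by
      refine Finset.sum_nonneg fun i _ => Finset.sum_nonneg fun j _ => ?_
      exact mul_nonneg (sq_nonneg _) (key_pair (v i) (w i) (v j) (w j))
    linarith
  -- identity: T1 + T2 = T3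
  have hid : (∑ i, ∑ j, (b i j ^ 2 * (2 * (v i * v j - w i * w j) ^ 2
          + (v i ^ 2 - w i ^ 2) * (v j ^ 2 - w j ^ 2))))
        + (∑ i, ∑ j, b i j ^ 2 * Qc i j)
      = ∑ i, ∑ j, b i j ^ 2 * brk i j := by
    rw [sum_sum_add]
    refine Finset.sum_congr rfl fun i _ => Finset.sum_congr rfl fun j _ => ?_
    rw [hQc, hbrk]
    ring
  have hsum3 : ∑ i, ∑ j, b i j ^ 2 * brk i j
      ≤ 4 * ∑ i, (v i * Real.sqrt (A i) - w i * Real.sqrt (B i)) ^ 2 := by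
    rw [Finset.mul_sum]
    exact Finset.sum_le_sum fun i _ => hper i
  -- rewrite goal pieces
  have hgoal1 : 2 * (∑ i, ∑ j, (b i j * (v i * v j - w i * w j)) ^ 2)
        + ∑ i, ∑ j, (v i ^ 2 - w i ^ 2) * b i j ^ 2 * (v j ^ 2 - w j ^ 2)
      = ∑ i, ∑ j, (b i j ^ 2 * (2 * (v i * v j - w i * w j) ^ 2
          + (v i ^ 2 - w i ^ 2) * (v j ^ 2 - w j ^ 2))) := by
    rw [Finset.mul_sum]
    have : ∀ i ∈ Finset.univ, 2 * ∑ j, (b i j * (v i * v j - w i * w j)) ^ 2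
        = ∑ j, 2 * (b i j * (v i * v j - w i * w j)) ^ 2 := fun i _ => Finset.mul_sum _ _ _
    rw [Finset.sum_congr rfl this, sum_sum_add]
    refine Finset.sum_congr rfl fun i _ => Finset.sum_congr rfl fun j _ => ?_
    ring
  linarith [hgoal1, hid, hQpos, hsum3]

theorem stmt_13 {n : ℕ}
    {Ω : Type} [MeasurableSpace Ω] (μ : Measure Ω) [IsProbabilityMeasure μ]
    (b : Fin n → Fin n → ℝ) (hb0 : ∀ i j, 0 ≤ b i j) (hbsym : ∀ i j, b i j = b j i)
    (g : Fin n → Fin n → Ω → ℝ)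
    (hindep : iIndepFun
      (fun q : {q : Fin n × Fin n // q.1 ≤ q.2} => g q.1.1 q.1.2) μ)
    (hg : ∀ i j : Fin n, i ≤ j → μ.map (g i j) = gaussianReal 0 1)
    (v w : Fin n → ℝ) :
    (∫ ω,
        ((∑ i, ∑ j, v i * (b i j * (if i ≤ j then g i j ω else g j i ω)) * v j) -
          (∑ i, ∑ j, w i * (b i j * (if i ≤ j then g i j ω else g j i ω)) * w j)) ^ 2 ∂μ) ≤
      4 * (∑ i, (v i * Real.sqrt (∑ j, b i j ^ 2 * v j ^ 2) -
                  w i * Real.sqrt (∑ j, b i j ^ 2 * w j ^ 2)) ^ 2) -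
        ∑ i, ∑ j, (v i ^ 2 - w i ^ 2) * b i j ^ 2 * (v j ^ 2 - w j ^ 2) := by
  classical
  set c : {q : Fin n × Fin n // q.1 ≤ q.2} → ℝ := fun q =>
    (if q.1.1 = q.1.2 then 1 else 2) * (b q.1.1 q.1.2 * (v q.1.1 * v q.1.2 - w q.1.1 * w q.1.2))
    with hc
  -- symmetry of the "if" combination
  have hgg : ∀ (ω : Ω) (i j : Fin n),
      (if i ≤ j then g i j ω else g j i ω) = (if j ≤ i then g j i ω else g i j ω) := by
    intro ω i j
    rcases le_or_gt i j with h | h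
    · rcases eq_or_lt_of_le h with rfl | h'
      · rfl
      · rw [if_pos h, if_neg (not_le_of_gt h')]
    · rw [if_neg (not_le_of_gt h), if_pos (le_of_lt h)]
  -- pointwise rewriting of the integrand's base
  have hdiff : ∀ ω : Ω,
      ((∑ i, ∑ j, v i * (b i j * (if i ≤ j then g i j ω else g j i ω)) * v j) -
        (∑ i, ∑ j, w i * (b i j * (if i ≤ j then g i j ω else g j i ω)) * w j))
      = ∑ q : {q : Fin n × Fin n // q.1 ≤ q.2}, c q * g q.1.1 q.1.2 ω := by
    intro ω
    have step1 : ((∑ i, ∑ j, v i * (b i j * (if i ≤ j then g i j ω else g j i ω)) * v j) -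
          (∑ i, ∑ j, w i * (b i j * (if i ≤ j then g i j ω else g j i ω)) * w j))
        = ∑ i, ∑ j, (b i j * (v i * v j - w i * w j))
            * (if i ≤ j then g i j ω else g j i ω) := by
      rw [← Finset.sum_sub_distrib]
      refine Finset.sum_congr rfl fun i _ => ?_
      rw [← Finset.sum_sub_distrib]
      refine Finset.sum_congr rfl fun j _ => ?_
      ring
    have step2 : (∑ i, ∑ j, (b i j * (v i * v j - w i * w j))
            * (if i ≤ j then g i j ω else g j i ω))
        = ∑ p : Fin n × Fin n, (b p.1 p.2 * (v p.1 * v p.2 - w p.1 * w p.2))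
            * (if p.1 ≤ p.2 then g p.1 p.2 ω else g p.2 p.1 ω) :=
      (Fintype.sum_prod_type (f := fun p : Fin n × Fin n =>
        (b p.1 p.2 * (v p.1 * v p.2 - w p.1 * w p.2))
          * (if p.1 ≤ p.2 then g p.1 p.2 ω else g p.2 p.1 ω))).symm
    have hsymX : ∀ i j : Fin n,
        (b i j * (v i * v j - w i * w j)) * (if i ≤ j then g i j ω else g j i ω)
        = (b j i * (v j * v i - w j * w i)) * (if j ≤ i then g j i ω else g i j ω) := by
      intro i j
      rw [← hgg ω i j, hbsym i j]
      ring
    have step3 := sum_pairs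
      (fun p : Fin n × Fin n => (b p.1 p.2 * (v p.1 * v p.2 - w p.1 * w p.2))
        * (if p.1 ≤ p.2 then g p.1 p.2 ω else g p.2 p.1 ω))
      (fun i j => hsymX i j)
    rw [step1, step2, step3]
    refine Finset.sum_congr rfl fun q _ => ?_
    simp only [hc, if_pos q.2]
    ring
  -- rewrite the integral using the independent-sum formula
  have hmap : ∀ q : {q : Fin n × Fin n // q.1 ≤ q.2},
      μ.map (g q.1.1 q.1.2) = gaussianReal 0 1 := fun q => hg _ _ q.2
  have hint : (∫ ω,
        ((∑ i, ∑ j, v i * (b i j * (if i ≤ j then g i j ω else g j i ω)) * v j) -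
          (∑ i, ∑ j, w i * (b i j * (if i ≤ j then g i j ω else g j i ω)) * w j)) ^ 2 ∂μ)
      = ∑ q : {q : Fin n × Fin n // q.1 ≤ q.2}, (c q) ^ 2 := by
    have hfun : (fun ω =>
        ((∑ i, ∑ j, v i * (b i j * (if i ≤ j then g i j ω else g j i ω)) * v j) -
          (∑ i, ∑ j, w i * (b i j * (if i ≤ j then g i j ω else g j i ω)) * w j)) ^ 2)
        = fun ω => (∑ q : {q : Fin n × Fin n // q.1 ≤ q.2}, c q * g q.1.1 q.1.2 ω) ^ 2 :=
      funext fun ω => by rw [hdiff ω]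
    calc (∫ ω,
        ((∑ i, ∑ j, v i * (b i j * (if i ≤ j then g i j ω else g j i ω)) * v j) -
          (∑ i, ∑ j, w i * (b i j * (if i ≤ j then g i j ω else g j i ω)) * w j)) ^ 2 ∂μ)
        = ∫ ω, (∑ q : {q : Fin n × Fin n // q.1 ≤ q.2}, c q * g q.1.1 q.1.2 ω) ^ 2 ∂μ :=
          congrArg (integral μ) hfun
      _ = ∑ q : {q : Fin n × Fin n // q.1 ≤ q.2}, (c q) ^ 2 :=
          sq_sum_integral c _ hmap hindep
  -- bound the sum of squared coefficients
  have hc2 : ∑ q : {q : Fin n × Fin n // q.1 ≤ q.2}, (c q) ^ 2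
      ≤ 2 * ∑ i, ∑ j, (b i j * (v i * v j - w i * w j)) ^ 2 := by
    have hX := sum_pairs
      (fun p : Fin n × Fin n => (b p.1 p.2 * (v p.1 * v p.2 - w p.1 * w p.2)) ^ 2)
      (fun i j => by dsimp only; rw [hbsym i j]; ring)
    have hle : ∑ q : {q : Fin n × Fin n // q.1 ≤ q.2}, (c q) ^ 2
        ≤ ∑ q : {q : Fin n × Fin n // q.1 ≤ q.2},
            2 * ((if q.1.1 = q.1.2 then (1:ℝ) else 2)
              * (b q.1.1 q.1.2 * (v q.1.1 * v q.1.2 - w q.1.1 * w q.1.2)) ^ 2) := by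
      refine Finset.sum_le_sum fun q _ => ?_
      rcases eq_or_ne q.1.1 q.1.2 with h | h
      · simp only [hc, if_pos h]
        nlinarith [sq_nonneg (b q.1.1 q.1.2 * (v q.1.1 * v q.1.2 - w q.1.1 * w q.1.2))]
      · simp only [hc, if_neg h]
        nlinarith [sq_nonneg (b q.1.1 q.1.2 * (v q.1.1 * v q.1.2 - w q.1.1 * w q.1.2))]
    calc ∑ q : {q : Fin n × Fin n // q.1 ≤ q.2}, (c q) ^ 2
        ≤ _ := hle
      _ = 2 * ∑ q : {q : Fin n × Fin n // q.1 ≤ q.2},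
            (if q.1.1 = q.1.2 then (1:ℝ) else 2)
              * (b q.1.1 q.1.2 * (v q.1.1 * v q.1.2 - w q.1.1 * w q.1.2)) ^ 2 :=
          (Finset.mul_sum _ _ _).symm
      _ = 2 * ∑ p : Fin n × Fin n, (b p.1 p.2 * (v p.1 * v p.2 - w p.1 * w p.2)) ^ 2 := by
          rw [← hX]
      _ = 2 * ∑ i, ∑ j, (b i j * (v i * v j - w i * w j)) ^ 2 := by
          rw [Fintype.sum_prod_type]
  have hdet := det_main b hbsym v w
  rw [hint]
  linarith [hc2, hdet]
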